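/- arXiv:1506.06320 — 2 statements merged into one kernel-verified Lean document; each statement's English description precedes it below -/
import Mathlib

section
/- With the setup in the context, define for x > 0: ρ1(x) = Σ_{k=1}^{n−2} |v_{n−2−k}| x^{−k} and ρ2(x) = |γ| x^{−1} + Σ_{k=2}^{n−1} |w_{n−1−k}| x^{−k}. Then for every x > 0 and every zero z of p, at least one of the following holds: |z²| ≤ x², or |z² − α| ≤ ρ1(x), or |z² − β| ≤ ρ2(x). -/
open Polynomial

private lemma pair_sum {R : Type*} [AddCommMonoid R] (f : ℕ → R) (m : ℕ) :
    ∑ i ∈ Finset.range (2 * m), f i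
      = ∑ j ∈ Finset.range m, (f (2 * j) + f (2 * j + 1)) := by
  induction m with
  | zero => simp
  | succ k ih =>
    have h2 : 2 * (k + 1) = (2 * k + 1) + 1 := by omega
    rw [h2, Finset.sum_range_succ, Finset.sum_range_succ, ih, Finset.sum_range_succ, add_assoc]

private def ccF (a : ℕ → ℂ) (z : ℂ) (j : ℕ) : ℂ := a (2 * j) + z * a (2 * j + 1)

private def ddF (a : ℕ → ℂ) (z : ℂ) (j : ℕ) : ℂ :=
  if j = 0 then z * a 0 else a (2 * j - 1) + z * a (2 * j)

theorem gershgorin_union_rho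
    (ℓ : ℕ) (hℓ : 3 ≤ ℓ) (b : ℕ → ℂ) (p : Polynomial ℂ)
    (hp : p = X ^ ℓ + ∑ i ∈ Finset.range ℓ, C (b i) * X ^ i)
    (m n : ℕ) (hm : m = (ℓ + 1) / 2) (hn : n = 2 * m)
    (a : ℕ → ℂ)
    (haeven : Even ℓ → ∀ j, j < n → a j = b j)
    (haodd : ¬ Even ℓ → a 0 = 0 ∧ ∀ j, 1 ≤ j → j < n → a j = b (j - 1))
    (A : ℕ → Matrix (Fin 2) (Fin 2) ℂ)
    (hA0 : A 0 = !![-(a 0), a (n - 1) * a 0; -(a 1), a (n - 1) * a 1 - a 0])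
    (hA : ∀ j, 1 ≤ j → j ≤ m - 1 →
      A j = !![-(a (2 * j)), a (n - 1) * a (2 * j) - a (2 * j - 1);
               -(a (2 * j + 1)), a (n - 1) * a (2 * j + 1) - a (2 * j)])
    (S : Matrix (Fin 2) (Fin 2) ℂ) (hS : IsUnit S)
    (α β γ : ℂ)
    (htri : S⁻¹ * A (m - 1) * S = !![α, γ; 0, β])
    (v w : ℕ → ℂ)
    (hvw : ∀ j, j ≤ m - 2 →
      S⁻¹ * A j * S = !![v (2 * j), w (2 * j); v (2 * j + 1), w (2 * j + 1)])
    (ρ1 ρ2 : ℝ → ℝ)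
    (hρ1 : ∀ x : ℝ, 0 < x →
      ρ1 x = ∑ k ∈ Finset.Icc 1 (n - 2), ‖v (n - 2 - k)‖ / x ^ k)
    (hρ2 : ∀ x : ℝ, 0 < x →
      ρ2 x = ‖γ‖ / x + ∑ k ∈ Finset.Icc 2 (n - 1), ‖w (n - 1 - k)‖ / x ^ k)
    : ∀ x : ℝ, 0 < x → ∀ z : ℂ, p.eval z = 0 →
      ‖z ^ 2‖ ≤ x ^ 2 ∨ ‖z ^ 2 - α‖ ≤ ρ1 x ∨
        ‖z ^ 2 - β‖ ≤ ρ2 x := by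
  intro x hx z hz
  have hm2 : 2 ≤ m := by omega
  obtain ⟨m', rfl⟩ : ∃ k, m = k + 2 := ⟨m - 2, by omega⟩
  have hn' : n = 2 * m' + 4 := by omega
  have hxne : (x : ℝ) ≠ 0 := ne_of_gt hx
  -- the root equation for p
  have hpz : z ^ ℓ + ∑ i ∈ Finset.range ℓ, b i * z ^ i = 0 := by
    have h := hz
    rw [hp] at h
    simpa [Polynomial.eval_finset_sum] using h
  -- the root equation for the auxiliary monic polynomial of degree n
  have hq : z ^ n + ∑ i ∈ Finset.range n, a i * z ^ i = 0 := by
    rcases Nat.even_or_odd ℓ with he | ho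
    · have hb := haeven he
      obtain ⟨r, hr⟩ := he
      have hnl : n = ℓ := by omega
      rw [hnl]
      have hsum : ∑ i ∈ Finset.range ℓ, a i * z ^ i = ∑ i ∈ Finset.range ℓ, b i * z ^ i := by
        refine Finset.sum_congr rfl fun i hi => ?_
        have hi' := Finset.mem_range.mp hi
        rw [hb i (by omega)]
      rw [hsum]
      exact hpz
    · have h' : ¬ Even ℓ := Nat.not_even_iff_odd.mpr ho
      obtain ⟨h0, hb⟩ := haodd h'
      have hodd : ℓ % 2 = 1 := Nat.odd_iff.mp ho
      have hnl : n = ℓ + 1 := by omega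
      rw [hnl, Finset.sum_range_succ' (fun i => a i * z ^ i) ℓ]
      have e1 : ∑ i ∈ Finset.range ℓ, a (i + 1) * z ^ (i + 1)
          = z * ∑ i ∈ Finset.range ℓ, b i * z ^ i := by
        rw [Finset.mul_sum]
        refine Finset.sum_congr rfl fun i hi => ?_
        have hi' := Finset.mem_range.mp hi
        rw [hb (i + 1) (by omega) (by omega), Nat.add_sub_cancel]
        ring
      rw [e1, h0]
      linear_combination z * hpz
  -- key polynomial identity 1 : sum of t^j * ccF = -t^m
  have hC : ∑ j ∈ Finset.range (m' + 2), (z ^ 2) ^ j * ccF a z j = -((z ^ 2) ^ (m' + 2)) := by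
    have h1 : z ^ n = (z ^ 2) ^ (m' + 2) := by rw [hn, pow_mul]
    have h2 : ∑ i ∈ Finset.range n, a i * z ^ i
        = ∑ j ∈ Finset.range (m' + 2), (z ^ 2) ^ j * ccF a z j := by
      rw [show n = 2 * (m' + 2) from hn, pair_sum]
      refine Finset.sum_congr rfl fun j _ => ?_
      simp only [ccF]
      rw [pow_succ, pow_mul]
      ring
    rw [h1, h2] at hq
    linear_combination hq
  -- key polynomial identity 2 : sum of t^j * ddF
  have hD : ∑ j ∈ Finset.range (m' + 2), (z ^ 2) ^ j * ddF a z j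
      = z * ∑ j ∈ Finset.range (m' + 2), (z ^ 2) ^ j * ccF a z j
        - a (n - 1) * (z ^ 2) ^ (m' + 2) := by
    have hL : ∑ j ∈ Finset.range (m' + 2), (z ^ 2) ^ j * ddF a z j
        = z * a 0 + ∑ j ∈ Finset.range (m' + 1),
            ((z ^ 2) ^ (j + 1) * a (2 * j + 1) + z * (z ^ 2) ^ (j + 1) * a (2 * j + 2)) := by
      rw [Finset.sum_range_succ' (fun j => (z ^ 2) ^ j * ddF a z j) (m' + 1)]
      have hdd0 : (z ^ 2) ^ 0 * ddF a z 0 = z * a 0 := by simp [ddF]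
      rw [hdd0, add_comm]
      congr 1
      refine Finset.sum_congr rfl fun j _ => ?_
      show (z ^ 2) ^ (j + 1) * ddF a z (j + 1) = _
      have e1 : 2 * (j + 1) - 1 = 2 * j + 1 := by omega
      have e2 : 2 * (j + 1) = 2 * j + 2 := by omega
      simp only [ddF]
      rw [if_neg (Nat.succ_ne_zero j), e1, e2]
      ring
    have hR : z * ∑ j ∈ Finset.range (m' + 2), (z ^ 2) ^ j * ccF a z j
          - a (n - 1) * (z ^ 2) ^ (m' + 2)
        = z * a 0 + ∑ j ∈ Finset.range (m' + 1),
            ((z ^ 2) ^ (j + 1) * a (2 * j + 1) + z * (z ^ 2) ^ (j + 1) * a (2 * j + 2)) := by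
      rw [Finset.mul_sum]
      have e : ∀ j ∈ Finset.range (m' + 2), z * ((z ^ 2) ^ j * ccF a z j)
          = z * (z ^ 2) ^ j * a (2 * j) + (z ^ 2) ^ (j + 1) * a (2 * j + 1) := by
        intro j _
        simp only [ccF]
        ring
      rw [Finset.sum_congr rfl e, Finset.sum_add_distrib,
        Finset.sum_range_succ' (fun j => z * (z ^ 2) ^ j * a (2 * j)) (m' + 1),
        Finset.sum_range_succ (fun j => (z ^ 2) ^ (j + 1) * a (2 * j + 1)) (m' + 1)]
      have ha' : a (2 * (m' + 1) + 1) = a (n - 1) := by congr 1; omega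
      rw [ha']
      have hmerge : ∑ j ∈ Finset.range (m' + 1), z * (z ^ 2) ^ (j + 1) * a (2 * (j + 1))
            + ∑ j ∈ Finset.range (m' + 1), (z ^ 2) ^ (j + 1) * a (2 * j + 1)
          = ∑ j ∈ Finset.range (m' + 1),
              ((z ^ 2) ^ (j + 1) * a (2 * j + 1) + z * (z ^ 2) ^ (j + 1) * a (2 * j + 2)) := by
        rw [← Finset.sum_add_distrib]
        refine Finset.sum_congr rfl fun j _ => ?_
        rw [show 2 * (j + 1) = 2 * j + 2 by omega]
        ring
      linear_combination hmerge
    rw [hL, ← hR]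
  -- matrix manipulation lemma
  have hdet : IsUnit S.det := (Matrix.isUnit_iff_isUnit_det S).mp hS
  have hSS : S * S⁻¹ = 1 := Matrix.mul_nonsing_inv S hdet
  have hcancel : ∀ B : Matrix (Fin 2) (Fin 2) ℂ, B * S = S * (S⁻¹ * B * S) := by
    intro B
    rw [← Matrix.mul_assoc, ← Matrix.mul_assoc, hSS, Matrix.one_mul]
  -- the column combinations for j ≤ m - 2
  have keyV : ∀ j, j < m' + 1 →
      (S 0 0 + z * S 1 0) * v (2 * j) + (S 0 1 + z * S 1 1) * v (2 * j + 1)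
        = -(ccF a z j) * S 0 0 + (a (n - 1) * ccF a z j - ddF a z j) * S 1 0 := by
    intro j hj
    have hABj : A j * S = S * !![v (2 * j), w (2 * j); v (2 * j + 1), w (2 * j + 1)] := by
      rw [hcancel (A j), hvw j (by omega)]
    have h0 : (A j * S) 0 0 + z * ((A j * S) 1 0)
        = (S * !![v (2 * j), w (2 * j); v (2 * j + 1), w (2 * j + 1)]) 0 0
          + z * ((S * !![v (2 * j), w (2 * j); v (2 * j + 1), w (2 * j + 1)]) 1 0) := by
      rw [hABj]
    rcases Nat.eq_zero_or_pos j with rfl | hj1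
    · rw [hA0] at h0
      simp [Matrix.mul_apply, Fin.sum_univ_two] at h0
      simp only [ccF, ddF, if_pos rfl]
      norm_num
      linear_combination -h0
    · rw [hA j (by omega) (by omega)] at h0
      simp [Matrix.mul_apply, Fin.sum_univ_two] at h0
      simp only [ccF, ddF]
      rw [if_neg (by omega : j ≠ 0)]
      linear_combination -h0
  have keyW : ∀ j, j < m' + 1 →
      (S 0 0 + z * S 1 0) * w (2 * j) + (S 0 1 + z * S 1 1) * w (2 * j + 1)
        = -(ccF a z j) * S 0 1 + (a (n - 1) * ccF a z j - ddF a z j) * S 1 1 := by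
    intro j hj
    have hABj : A j * S = S * !![v (2 * j), w (2 * j); v (2 * j + 1), w (2 * j + 1)] := by
      rw [hcancel (A j), hvw j (by omega)]
    have h0 : (A j * S) 0 1 + z * ((A j * S) 1 1)
        = (S * !![v (2 * j), w (2 * j); v (2 * j + 1), w (2 * j + 1)]) 0 1
          + z * ((S * !![v (2 * j), w (2 * j); v (2 * j + 1), w (2 * j + 1)]) 1 1) := by
      rw [hABj]
    rcases Nat.eq_zero_or_pos j with rfl | hj1
    · rw [hA0] at h0
      simp [Matrix.mul_apply, Fin.sum_univ_two] at h0
      simp only [ccF, ddF, if_pos rfl]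
      norm_num
      linear_combination -h0
    · rw [hA j (by omega) (by omega)] at h0
      simp [Matrix.mul_apply, Fin.sum_univ_two] at h0
      simp only [ccF, ddF]
      rw [if_neg (by omega : j ≠ 0)]
      linear_combination -h0
  -- the last block (triangularized)
  have htri' : S⁻¹ * A (m' + 1) * S = !![α, γ; 0, β] := by
    have h : m' + 2 - 1 = m' + 1 := by omega
    rw [h] at htri
    exact htri
  have hABm : A (m' + 1) * S = S * !![α, γ; 0, β] := by
    rw [hcancel (A (m' + 1)), htri']
  have keyα : (S 0 0 + z * S 1 0) * α
      = -(ccF a z (m' + 1)) * S 0 0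
        + (a (n - 1) * ccF a z (m' + 1) - ddF a z (m' + 1)) * S 1 0 := by
    have h0 : (A (m' + 1) * S) 0 0 + z * ((A (m' + 1) * S) 1 0)
        = (S * !![α, γ; 0, β]) 0 0 + z * ((S * !![α, γ; 0, β]) 1 0) := by rw [hABm]
    rw [hA (m' + 1) (by omega) (by omega)] at h0
    simp [Matrix.mul_apply, Fin.sum_univ_two] at h0
    simp only [ccF, ddF]
    rw [if_neg (Nat.succ_ne_zero m')]
    linear_combination -h0
  have keyβγ : (S 0 0 + z * S 1 0) * γ + (S 0 1 + z * S 1 1) * β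
      = -(ccF a z (m' + 1)) * S 0 1
        + (a (n - 1) * ccF a z (m' + 1) - ddF a z (m' + 1)) * S 1 1 := by
    have h0 : (A (m' + 1) * S) 0 1 + z * ((A (m' + 1) * S) 1 1)
        = (S * !![α, γ; 0, β]) 0 1 + z * ((S * !![α, γ; 0, β]) 1 1) := by rw [hABm]
    rw [hA (m' + 1) (by omega) (by omega)] at h0
    simp [Matrix.mul_apply, Fin.sum_univ_two] at h0
    simp only [ccF, ddF]
    rw [if_neg (Nat.succ_ne_zero m')]
    linear_combination -h0
  -- closed form of the weighted sums
  have lemC : ∀ u₀ u₁ : ℂ,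
      ∑ j ∈ Finset.range (m' + 2),
          (z ^ 2) ^ j * (-(ccF a z j) * u₀ + (a (n - 1) * ccF a z j - ddF a z j) * u₁)
        = (z ^ 2) ^ (m' + 2) * (u₀ + z * u₁) := by
    intro u₀ u₁
    have hsplit : ∑ j ∈ Finset.range (m' + 2),
          (z ^ 2) ^ j * (-(ccF a z j) * u₀ + (a (n - 1) * ccF a z j - ddF a z j) * u₁)
        = (∑ j ∈ Finset.range (m' + 2), (z ^ 2) ^ j * ccF a z j) * (a (n - 1) * u₁ - u₀)
          - (∑ j ∈ Finset.range (m' + 2), (z ^ 2) ^ j * ddF a z j) * u₁ := by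
      rw [Finset.sum_mul, Finset.sum_mul, ← Finset.sum_sub_distrib]
      exact Finset.sum_congr rfl fun j _ => by ring
    rw [hsplit, hD, hC]
    ring
  -- the two Gershgorin row identities
  have hK1 : (z ^ 2 - α) * ((z ^ 2) ^ (m' + 1) * (S 0 0 + z * S 1 0))
      = ∑ j ∈ Finset.range (m' + 1), (z ^ 2) ^ j *
          ((S 0 0 + z * S 1 0) * v (2 * j) + (S 0 1 + z * S 1 1) * v (2 * j + 1)) := by
    have h1 : ∑ j ∈ Finset.range (m' + 2),
          (z ^ 2) ^ j * (-(ccF a z j) * S 0 0 + (a (n - 1) * ccF a z j - ddF a z j) * S 1 0)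
        = (∑ j ∈ Finset.range (m' + 1), (z ^ 2) ^ j *
            ((S 0 0 + z * S 1 0) * v (2 * j) + (S 0 1 + z * S 1 1) * v (2 * j + 1)))
          + (z ^ 2) ^ (m' + 1) * ((S 0 0 + z * S 1 0) * α) := by
      rw [Finset.sum_range_succ]
      congr 1
      · refine Finset.sum_congr rfl fun j hj => ?_
        rw [keyV j (Finset.mem_range.mp hj)]
      · rw [keyα]
    have h2 := lemC (S 0 0) (S 1 0)
    linear_combination h1 - h2
  have hK2 : (z ^ 2 - β) * ((z ^ 2) ^ (m' + 1) * (S 0 1 + z * S 1 1))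
      = γ * ((z ^ 2) ^ (m' + 1) * (S 0 0 + z * S 1 0))
        + ∑ j ∈ Finset.range (m' + 1), (z ^ 2) ^ j *
            ((S 0 0 + z * S 1 0) * w (2 * j) + (S 0 1 + z * S 1 1) * w (2 * j + 1)) := by
    have h1 : ∑ j ∈ Finset.range (m' + 2),
          (z ^ 2) ^ j * (-(ccF a z j) * S 0 1 + (a (n - 1) * ccF a z j - ddF a z j) * S 1 1)
        = (∑ j ∈ Finset.range (m' + 1), (z ^ 2) ^ j *
            ((S 0 0 + z * S 1 0) * w (2 * j) + (S 0 1 + z * S 1 1) * w (2 * j + 1)))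
          + (z ^ 2) ^ (m' + 1) * ((S 0 0 + z * S 1 0) * γ + (S 0 1 + z * S 1 1) * β) := by
      rw [Finset.sum_range_succ]
      congr 1
      · refine Finset.sum_congr rfl fun j hj => ?_
        rw [keyW j (Finset.mem_range.mp hj)]
      · rw [keyβγ]
    have h2 := lemC (S 0 1) (S 1 1)
    linear_combination h1 - h2
  -- the eigenvector components
  set g : ℕ → ℂ := fun i =>
    (z ^ 2) ^ (i / 2) * (if i % 2 = 0 then S 0 0 + z * S 1 0 else S 0 1 + z * S 1 1) with hg
  have hge : ∀ j, g (2 * j) = (z ^ 2) ^ j * (S 0 0 + z * S 1 0) := by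
    intro j
    have h1 : 2 * j / 2 = j := by omega
    have h2 : 2 * j % 2 = 0 := by omega
    simp [hg, h1, h2]
  have hgo : ∀ j, g (2 * j + 1) = (z ^ 2) ^ j * (S 0 1 + z * S 1 1) := by
    intro j
    have h1 : (2 * j + 1) / 2 = j := by omega
    have h2 : (2 * j + 1) % 2 = 1 := by omega
    simp [hg, h1, h2]
  have hgstep : ∀ i, g (i + 2) = z ^ 2 * g i := by
    intro i
    have h1 : (i + 2) / 2 = i / 2 + 1 := by omega
    have h2 : (i + 2) % 2 = i % 2 := by omega
    simp only [hg, h1, h2]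
    ring
  -- maximal weighted component
  have hnne : (Finset.range n).Nonempty := ⟨0, Finset.mem_range.mpr (by omega)⟩
  obtain ⟨i₀, hi₀mem, hi₀max⟩ :=
    Finset.exists_max_image (Finset.range n) (fun i => ‖g i‖ / x ^ i) hnne
  have hi₀n := Finset.mem_range.mp hi₀mem
  set Mv : ℝ := ‖g i₀‖ / x ^ i₀ with hMv
  have hbound : ∀ i, i < n → ‖g i‖ ≤ Mv * x ^ i := by
    intro i hi
    have h := hi₀max i (Finset.mem_range.mpr hi)
    exact (div_le_iff₀ (pow_pos hx i)).mp h
  -- Mv is positive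
  have hdet2 : S 0 0 * S 1 1 - S 0 1 * S 1 0 ≠ 0 := by
    have h := hdet.ne_zero
    rwa [Matrix.det_fin_two] at h
  have hψne : S 0 0 + z * S 1 0 ≠ 0 ∨ S 0 1 + z * S 1 1 ≠ 0 := by
    by_contra h
    push_neg at h
    obtain ⟨h0, h1⟩ := h
    exact hdet2 (by linear_combination S 1 1 * h0 - S 1 0 * h1)
  have hMv0 : 0 < Mv := by
    rcases hψne with h | h
    · have hg0 : g 0 = S 0 0 + z * S 1 0 := by simpa using hge 0
      have hle : ‖g 0‖ / x ^ 0 ≤ Mv := hi₀max 0 (Finset.mem_range.mpr (by omega))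
      have : (0 : ℝ) < ‖g 0‖ / x ^ 0 := by
        rw [hg0]
        exact div_pos (norm_pos_iff.mpr h) (pow_pos hx 0)
      linarith
    · have hg1 : g 1 = S 0 1 + z * S 1 1 := by simpa using hgo 0
      have hle : ‖g 1‖ / x ^ 1 ≤ Mv := hi₀max 1 (Finset.mem_range.mpr (by omega))
      have : (0 : ℝ) < ‖g 1‖ / x ^ 1 := by
        rw [hg1]
        exact div_pos (norm_pos_iff.mpr h) (pow_pos hx 1)
      linarith
  have habsi₀ : ‖g i₀‖ = Mv * x ^ i₀ := by
    rw [hMv]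
    field_simp
  -- three cases according to the position of the maximum
  have htri3 : i₀ < n - 2 ∨ i₀ = n - 2 ∨ i₀ = n - 1 := by omega
  rcases htri3 with hcase | hcase | hcase
  · -- |z^2| ≤ x^2
    left
    have h1 : ‖g (i₀ + 2)‖ ≤ Mv * x ^ (i₀ + 2) := hbound _ (by omega)
    rw [hgstep i₀, norm_mul, habsi₀] at h1
    have hps : (x : ℝ) ^ (i₀ + 2) = x ^ i₀ * x ^ 2 := by ring
    rw [hps] at h1
    have hpos : (0 : ℝ) < Mv * x ^ i₀ := mul_pos hMv0 (pow_pos hx i₀)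
    have h2 : (Mv * x ^ i₀) * ‖z ^ 2‖ ≤ (Mv * x ^ i₀) * x ^ 2 := by
      calc (Mv * x ^ i₀) * ‖z ^ 2‖
          = ‖z ^ 2‖ * (Mv * x ^ i₀) := by ring
        _ ≤ Mv * (x ^ i₀ * x ^ 2) := h1
        _ = (Mv * x ^ i₀) * x ^ 2 := by ring
    exact le_of_mul_le_mul_left h2 hpos
  · -- |z^2 - α| ≤ ρ1 x
    right; left
    have hidx : n - 2 = 2 * (m' + 1) := by omega
    have hgn2 : g (n - 2) = (z ^ 2) ^ (m' + 1) * (S 0 0 + z * S 1 0) := by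
      rw [hidx]; exact hge (m' + 1)
    have habsg : ‖g (n - 2)‖ = Mv * x ^ (n - 2) := by rw [← hcase]; exact habsi₀
    -- termwise bounds
    have hterm : ∀ j ∈ Finset.range (m' + 1),
        ‖(z ^ 2) ^ j *
            ((S 0 0 + z * S 1 0) * v (2 * j) + (S 0 1 + z * S 1 1) * v (2 * j + 1))‖
          ≤ Mv * x ^ (2 * j) * ‖v (2 * j)‖
            + Mv * x ^ (2 * j + 1) * ‖v (2 * j + 1)‖ := by
      intro j hj
      have hj' := Finset.mem_range.mp hj
      have e : (z ^ 2) ^ j *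
            ((S 0 0 + z * S 1 0) * v (2 * j) + (S 0 1 + z * S 1 1) * v (2 * j + 1))
          = g (2 * j) * v (2 * j) + g (2 * j + 1) * v (2 * j + 1) := by
        rw [hge j, hgo j]; ring
      rw [e]
      refine le_trans (norm_add_le _ _) ?_
      rw [norm_mul (g (2 * j)), norm_mul (g (2 * j + 1))]
      exact add_le_add
        (mul_le_mul_of_nonneg_right (hbound (2 * j) (by omega)) (norm_nonneg _))
        (mul_le_mul_of_nonneg_right (hbound (2 * j + 1) (by omega)) (norm_nonneg _))
    have hsumle : ‖(z ^ 2 - α) * ((z ^ 2) ^ (m' + 1) * (S 0 0 + z * S 1 0))‖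
        ≤ ∑ j ∈ Finset.range (m' + 1),
            (Mv * x ^ (2 * j) * ‖v (2 * j)‖
              + Mv * x ^ (2 * j + 1) * ‖v (2 * j + 1)‖) := by
      rw [hK1]
      exact le_trans (norm_sum_le _ _) (Finset.sum_le_sum hterm)
    have hpairv : ∑ j ∈ Finset.range (m' + 1),
          (Mv * x ^ (2 * j) * ‖v (2 * j)‖
            + Mv * x ^ (2 * j + 1) * ‖v (2 * j + 1)‖)
        = Mv * ∑ i ∈ Finset.range (2 * (m' + 1)), x ^ i * ‖v i‖ := by
      rw [pair_sum (fun i => x ^ i * ‖v i‖) (m' + 1), Finset.mul_sum]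
      exact Finset.sum_congr rfl fun j _ => by ring
    have hρ : ρ1 x * x ^ (n - 2) = ∑ i ∈ Finset.range (2 * (m' + 1)), x ^ i * ‖v i‖ := by
      rw [hρ1 x hx, Finset.sum_mul]
      have e1 : ∀ k ∈ Finset.Icc 1 (n - 2), ‖v (n - 2 - k)‖ / x ^ k * x ^ (n - 2)
          = x ^ (n - 2 - k) * ‖v (n - 2 - k)‖ := by
        intro k hk
        have hk' := Finset.mem_Icc.mp hk
        have hx2 : (x : ℝ) ^ (n - 2) = x ^ (n - 2 - k) * x ^ k := by
          rw [← pow_add]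
          congr 1
          omega
        rw [hx2]
        field_simp
      rw [Finset.sum_congr rfl e1, ← Finset.Ico_add_one_right_eq_Icc, Finset.sum_Ico_eq_sum_range]
      have e2 : n - 2 + 1 - 1 = 2 * (m' + 1) := by omega
      rw [e2, ← Finset.sum_range_reflect (fun i => x ^ i * ‖v i‖) (2 * (m' + 1))]
      refine Finset.sum_congr rfl fun j hj => ?_
      have hj' := Finset.mem_range.mp hj
      have e3 : n - 2 - (1 + j) = 2 * (m' + 1) - 1 - j := by omega
      rw [e3]
    have hfin : ‖z ^ 2 - α‖ * (Mv * x ^ (n - 2)) ≤ ρ1 x * (Mv * x ^ (n - 2)) := by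
      calc ‖z ^ 2 - α‖ * (Mv * x ^ (n - 2))
          = ‖(z ^ 2 - α) * ((z ^ 2) ^ (m' + 1) * (S 0 0 + z * S 1 0))‖ := by
            rw [norm_mul, ← hgn2, habsg]
        _ ≤ ∑ j ∈ Finset.range (m' + 1),
              (Mv * x ^ (2 * j) * ‖v (2 * j)‖
                + Mv * x ^ (2 * j + 1) * ‖v (2 * j + 1)‖) := hsumle
        _ = Mv * ∑ i ∈ Finset.range (2 * (m' + 1)), x ^ i * ‖v i‖ := hpairv
        _ = Mv * (ρ1 x * x ^ (n - 2)) := by rw [hρ]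
        _ = ρ1 x * (Mv * x ^ (n - 2)) := by ring
    exact le_of_mul_le_mul_right hfin (mul_pos hMv0 (pow_pos hx _))
  · -- |z^2 - β| ≤ ρ2 x
    right; right
    have hidx : n - 1 = 2 * (m' + 1) + 1 := by omega
    have hgn1 : g (n - 1) = (z ^ 2) ^ (m' + 1) * (S 0 1 + z * S 1 1) := by
      rw [hidx]; exact hgo (m' + 1)
    have hgn2 : g (n - 2) = (z ^ 2) ^ (m' + 1) * (S 0 0 + z * S 1 0) := by
      rw [show n - 2 = 2 * (m' + 1) by omega]; exact hge (m' + 1)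
    have habsg : ‖g (n - 1)‖ = Mv * x ^ (n - 1) := by rw [← hcase]; exact habsi₀
    have hterm : ∀ j ∈ Finset.range (m' + 1),
        ‖(z ^ 2) ^ j *
            ((S 0 0 + z * S 1 0) * w (2 * j) + (S 0 1 + z * S 1 1) * w (2 * j + 1))‖
          ≤ Mv * x ^ (2 * j) * ‖w (2 * j)‖
            + Mv * x ^ (2 * j + 1) * ‖w (2 * j + 1)‖ := by
      intro j hj
      have hj' := Finset.mem_range.mp hj
      have e : (z ^ 2) ^ j *
            ((S 0 0 + z * S 1 0) * w (2 * j) + (S 0 1 + z * S 1 1) * w (2 * j + 1))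
          = g (2 * j) * w (2 * j) + g (2 * j + 1) * w (2 * j + 1) := by
        rw [hge j, hgo j]; ring
      rw [e]
      refine le_trans (norm_add_le _ _) ?_
      rw [norm_mul (g (2 * j)), norm_mul (g (2 * j + 1))]
      exact add_le_add
        (mul_le_mul_of_nonneg_right (hbound (2 * j) (by omega)) (norm_nonneg _))
        (mul_le_mul_of_nonneg_right (hbound (2 * j + 1) (by omega)) (norm_nonneg _))
    have hsumle : ‖(z ^ 2 - β) * ((z ^ 2) ^ (m' + 1) * (S 0 1 + z * S 1 1))‖
        ≤ ‖γ‖ * (Mv * x ^ (n - 2))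
          + ∑ j ∈ Finset.range (m' + 1),
              (Mv * x ^ (2 * j) * ‖w (2 * j)‖
                + Mv * x ^ (2 * j + 1) * ‖w (2 * j + 1)‖) := by
      rw [hK2]
      refine le_trans (norm_add_le _ _) (add_le_add ?_ ?_)
      · rw [norm_mul, ← hgn2]
        exact mul_le_mul_of_nonneg_left (hbound (n - 2) (by omega)) (norm_nonneg _)
      · exact le_trans (norm_sum_le _ _) (Finset.sum_le_sum hterm)
    have hpairw : ∑ j ∈ Finset.range (m' + 1),
          (Mv * x ^ (2 * j) * ‖w (2 * j)‖
            + Mv * x ^ (2 * j + 1) * ‖w (2 * j + 1)‖)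
        = Mv * ∑ i ∈ Finset.range (2 * (m' + 1)), x ^ i * ‖w i‖ := by
      rw [pair_sum (fun i => x ^ i * ‖w i‖) (m' + 1), Finset.mul_sum]
      exact Finset.sum_congr rfl fun j _ => by ring
    have hρ : ρ2 x * x ^ (n - 1)
        = ‖γ‖ * x ^ (n - 2)
          + ∑ i ∈ Finset.range (2 * (m' + 1)), x ^ i * ‖w i‖ := by
      rw [hρ2 x hx, add_mul]
      have hγ : ‖γ‖ / x * x ^ (n - 1) = ‖γ‖ * x ^ (n - 2) := by
        have hx2 : (x : ℝ) ^ (n - 1) = x ^ (n - 2) * x := by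
          rw [← pow_succ]
          congr 1
          omega
        rw [hx2]
        field_simp
      rw [hγ]
      congr 1
      rw [Finset.sum_mul]
      have e1 : ∀ k ∈ Finset.Icc 2 (n - 1), ‖w (n - 1 - k)‖ / x ^ k * x ^ (n - 1)
          = x ^ (n - 1 - k) * ‖w (n - 1 - k)‖ := by
        intro k hk
        have hk' := Finset.mem_Icc.mp hk
        have hx2 : (x : ℝ) ^ (n - 1) = x ^ (n - 1 - k) * x ^ k := by
          rw [← pow_add]
          congr 1
          omega
        rw [hx2]
        field_simp
      rw [Finset.sum_congr rfl e1, ← Finset.Ico_add_one_right_eq_Icc, Finset.sum_Ico_eq_sum_range]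
      have e2 : n - 1 + 1 - 2 = 2 * (m' + 1) := by omega
      rw [e2, ← Finset.sum_range_reflect (fun i => x ^ i * ‖w i‖) (2 * (m' + 1))]
      refine Finset.sum_congr rfl fun j hj => ?_
      have hj' := Finset.mem_range.mp hj
      have e3 : n - 1 - (2 + j) = 2 * (m' + 1) - 1 - j := by omega
      rw [e3]
    have hfin : ‖z ^ 2 - β‖ * (Mv * x ^ (n - 1)) ≤ ρ2 x * (Mv * x ^ (n - 1)) := by
      calc ‖z ^ 2 - β‖ * (Mv * x ^ (n - 1))
          = ‖(z ^ 2 - β) * ((z ^ 2) ^ (m' + 1) * (S 0 1 + z * S 1 1))‖ := by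
            rw [norm_mul, ← hgn1, habsg]
        _ ≤ ‖γ‖ * (Mv * x ^ (n - 2))
            + ∑ j ∈ Finset.range (m' + 1),
                (Mv * x ^ (2 * j) * ‖w (2 * j)‖
                  + Mv * x ^ (2 * j + 1) * ‖w (2 * j + 1)‖) := hsumle
        _ = Mv * (‖γ‖ * x ^ (n - 2)
            + ∑ i ∈ Finset.range (2 * (m' + 1)), x ^ i * ‖w i‖) := by
            rw [hpairw]; ring
        _ = Mv * (ρ2 x * x ^ (n - 1)) := by rw [hρ]
        _ = ρ2 x * (Mv * x ^ (n - 1)) := by ring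
    exact le_of_mul_le_mul_right hfin (mul_pos hMv0 (pow_pos hx _))
end

section
/- With the setup in the context, for every x > 0 and every zero z of p, at least one of the following holds: |z²| ≤ x, or |z² − α| ≤ τ(x), or |z² − β| ≤ τ(x). (Equivalently, the block-column Gershgorin set of the similarity-transformed squared companion matrix is the union of the disc of radius x about 0 and the two discs of common radius τ(x) about α and β.) -/
open Polynomial

/-- The spectral norm (operator norm induced by the Euclidean norm) of a complex matrix. -/
noncomputable def specNorm {d : ℕ} (M : Matrix (Fin d) (Fin d) ℂ) : ℝ :=
  ‖Matrix.toEuclideanCLM (𝕜 := ℂ) M‖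

noncomputable def ev {d : ℕ} (v : Fin d → ℂ) : EuclideanSpace ℂ (Fin d) :=
  (WithLp.equiv 2 _).symm v

lemma evCLM {d : ℕ} (M : Matrix (Fin d) (Fin d) ℂ) (x : Fin d → ℂ) :
    Matrix.toEuclideanCLM (𝕜 := ℂ) M (ev x) = ev (M.mulVec x) := by
  simp [ev, Matrix.toEuclideanCLM_toLp, Matrix.toLin'_apply]

lemma mulVec_norm_le {d : ℕ} (M : Matrix (Fin d) (Fin d) ℂ) (x : Fin d → ℂ) :
    ‖ev (M.mulVec x)‖ ≤ specNorm M * ‖ev x‖ := by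
  have h := (Matrix.toEuclideanCLM (𝕜 := ℂ) M).le_opNorm (ev x)
  rwa [evCLM] at h

lemma ev_star_norm {d : ℕ} (x : Fin d → ℂ) : ‖ev (star x)‖ = ‖ev x‖ := by
  rw [EuclideanSpace.norm_eq, EuclideanSpace.norm_eq]
  congr 1
  apply Finset.sum_congr rfl
  intro i _
  simp [ev]

set_option synthInstance.maxHeartbeats 400000 in
lemma specNorm_conjTranspose {d : ℕ} (M : Matrix (Fin d) (Fin d) ℂ) :
    specNorm (Matrix.conjTranspose M) = specNorm M := by
  unfold specNorm
  rw [show Matrix.conjTranspose M = star M from rfl, map_star,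
    ContinuousLinearMap.star_eq_adjoint]
  exact (ContinuousLinearMap.adjoint (𝕜 := ℂ)).norm_map _

lemma map_star_mulVec {d : ℕ} (M : Matrix (Fin d) (Fin d) ℂ) (x : Fin d → ℂ) :
    (M.map star).mulVec x = star (M.mulVec (star x)) := by
  funext i
  simp only [Matrix.mulVec, dotProduct, Pi.star_apply, star_sum, star_mul',
    Matrix.map_apply, star_star]

lemma specNorm_map_star_le {d : ℕ} (M : Matrix (Fin d) (Fin d) ℂ) :
    specNorm (M.map star) ≤ specNorm M := by
  apply ContinuousLinearMap.opNorm_le_bound _ (norm_nonneg _)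
  intro x
  have hx : x = ev (WithLp.equiv 2 _ x) := rfl
  rw [hx, evCLM, map_star_mulVec]
  calc ‖ev (star (M.mulVec (star (WithLp.equiv 2 _ x))))‖
      = ‖ev (M.mulVec (star (WithLp.equiv 2 _ x)))‖ := ev_star_norm _
    _ ≤ specNorm M * ‖ev (star (WithLp.equiv 2 _ x))‖ := mulVec_norm_le _ _
    _ = specNorm M * ‖ev (WithLp.equiv 2 _ x)‖ := by rw [ev_star_norm]

lemma vecMul_norm_le {d : ℕ} (M : Matrix (Fin d) (Fin d) ℂ) (v : Fin d → ℂ) :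
    ‖ev (Matrix.vecMul v M)‖ ≤ specNorm M * ‖ev v‖ := by
  have h1 : Matrix.vecMul v M = (Matrix.conjTranspose (M.map star)).mulVec v := by
    rw [← Matrix.mulVec_transpose]
    have : Matrix.transpose M = Matrix.conjTranspose (M.map star) := by
      funext i j
      simp [Matrix.conjTranspose_apply]
    rw [this]
  rw [h1]
  calc ‖ev ((Matrix.conjTranspose (M.map star)).mulVec v)‖
      ≤ specNorm (Matrix.conjTranspose (M.map star)) * ‖ev v‖ := mulVec_norm_le _ _
    _ ≤ specNorm M * ‖ev v‖ := by
        rw [specNorm_conjTranspose]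
        exact mul_le_mul_of_nonneg_right (specNorm_map_star_le M) (norm_nonneg _)

lemma ev_norm_sq (v : Fin 2 → ℂ) :
    ‖ev v‖ ^ 2 = ‖v 0‖ ^ 2 + ‖v 1‖ ^ 2 := by
  rw [EuclideanSpace.norm_eq, Real.sq_sqrt (by positivity)]
  simp [ev, Fin.sum_univ_two]

lemma pairsum (f : ℕ → ℂ) (m : ℕ) :
    ∑ j ∈ Finset.range (2*m), f j = ∑ k ∈ Finset.range m, (f (2*k) + f (2*k+1)) := by
  induction m with
  | zero => simp
  | succ m ih =>
    have h2 : 2 * (m+1) = (2*m + 1) + 1 := by ring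
    rw [Finset.sum_range_succ, h2, Finset.sum_range_succ, Finset.sum_range_succ, ih,
      add_assoc]

lemma icc_reflect (m : ℕ) (hm2 : 2 ≤ m) (g : ℕ → ℝ) (x : ℝ) :
    ∑ k ∈ Finset.Icc 1 (m-1), g (m-1-k) / x ^ k
      = ∑ j ∈ Finset.range (m-1), g j / x ^ (m-1-j) := by
  rw [← Finset.Ico_add_one_right_eq_Icc, Finset.sum_Ico_eq_sum_range, ← Finset.sum_range_reflect]
  apply Finset.sum_congr (by congr 1)
  intro j hj
  simp only [Finset.mem_range] at hj
  congr 2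
  · omega
  · omega

lemma vecMul_matsmul {d : ℕ} (v : Fin d → ℂ) (c : ℂ) (M : Matrix (Fin d) (Fin d) ℂ) :
    Matrix.vecMul v (c • M) = c • Matrix.vecMul v M := by
  funext j
  simp only [Matrix.vecMul, dotProduct, Matrix.smul_apply, Pi.smul_apply,
    smul_eq_mul, Finset.mul_sum]
  apply Finset.sum_congr rfl
  intro i _
  ring

lemma vecMul_finset_sum {d : ℕ} (v : Fin d → ℂ) (s : Finset ℕ)
    (M : ℕ → Matrix (Fin d) (Fin d) ℂ) :
    Matrix.vecMul v (∑ k ∈ s, M k) = ∑ k ∈ s, Matrix.vecMul v (M k) := by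
  induction s using Finset.cons_induction with
  | empty => simp
  | cons a s ha ih => rw [Finset.sum_cons, Finset.sum_cons, Matrix.vecMul_add, ih]

lemma ev_sum {d : ℕ} (s : Finset ℕ) (u : ℕ → (Fin d → ℂ)) :
    ev (∑ k ∈ s, u k) = ∑ k ∈ s, ev (u k) := by
  induction s using Finset.cons_induction with
  | empty => rfl
  | cons a s ha ih => rw [Finset.sum_cons, Finset.sum_cons, ← ih]; rfl

theorem block_gershgorin_union_tau
    (ℓ : ℕ) (hℓ : 3 ≤ ℓ) (b : ℕ → ℂ) (p : Polynomial ℂ)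
    (hp : p = X ^ ℓ + ∑ i ∈ Finset.range ℓ, C (b i) * X ^ i)
    (m n : ℕ) (hm : m = (ℓ + 1) / 2) (hn : n = 2 * m)
    (a : ℕ → ℂ)
    (haeven : Even ℓ → ∀ j, j < n → a j = b j)
    (haodd : ¬ Even ℓ → a 0 = 0 ∧ ∀ j, 1 ≤ j → j < n → a j = b (j - 1))
    (A : ℕ → Matrix (Fin 2) (Fin 2) ℂ)
    (hA0 : A 0 = !![-(a 0), a (n - 1) * a 0; -(a 1), a (n - 1) * a 1 - a 0])
    (hA : ∀ j, 1 ≤ j → j ≤ m - 1 →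
      A j = !![-(a (2 * j)), a (n - 1) * a (2 * j) - a (2 * j - 1);
               -(a (2 * j + 1)), a (n - 1) * a (2 * j + 1) - a (2 * j)])
    (S : Matrix (Fin 2) (Fin 2) ℂ) (hS : IsUnit S)
    (α β : ℂ)
    (hdiag : S⁻¹ * A (m - 1) * S = !![α, 0; 0, β])
    (hαβ : ‖α‖ ≤ ‖β‖)
    (T : ℕ → Matrix (Fin 2) (Fin 2) ℂ)
    (hT : ∀ j, j ≤ m - 2 → T j = S⁻¹ * A j * S)
    (τ : ℝ → ℝ)
    (hτ : ∀ x : ℝ, 0 < x →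
      τ x = ∑ k ∈ Finset.Icc 1 (m - 1), specNorm (T (m - 1 - k)) / x ^ k)
    : ∀ x : ℝ, 0 < x → ∀ z : ℂ, p.eval z = 0 →
      ‖z ^ 2‖ ≤ x ∨ ‖z ^ 2 - α‖ ≤ τ x ∨
        ‖z ^ 2 - β‖ ≤ τ x := by
  intro x hx z hz
  by_contra hcon
  push_neg at hcon
  obtain ⟨hx1, hα1, hβ1⟩ := hcon
  set w : ℂ := z ^ 2 with hw
  have hm2 : 2 ≤ m := by omega
  -- Step A : the degree-n polynomial identity
  have hPz : z ^ (2*m) + ∑ j ∈ Finset.range (2*m), a j * z ^ j = 0 := by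
    have hev : z ^ ℓ + ∑ i ∈ Finset.range ℓ, b i * z ^ i = 0 := by
      rw [hp] at hz
      simpa [eval_finset_sum] using hz
    rcases Nat.even_or_odd ℓ with he | ho
    · obtain ⟨t, ht⟩ := he
      have h2m : 2 * m = ℓ := by omega
      rw [h2m]
      rw [show (∑ j ∈ Finset.range ℓ, a j * z ^ j) = ∑ j ∈ Finset.range ℓ, b j * z ^ j from
        Finset.sum_congr rfl fun j hj => by
          rw [haeven ⟨t, ht⟩ j (by simp at hj; omega)]]
      exact hev
    · have hne : ¬ Even ℓ := Nat.not_even_iff_odd.mpr ho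
      obtain ⟨ha0, haj⟩ := haodd hne
      have h2m : 2 * m = ℓ + 1 := by
        obtain ⟨t, ht⟩ := ho; omega
      rw [h2m, Finset.sum_range_succ', ha0]
      have : ∀ j ∈ Finset.range ℓ, a (j+1) * z ^ (j+1) = z * (b j * z ^ j) := by
        intro j hj
        simp only [Finset.mem_range] at hj
        rw [haj (j+1) (by omega) (by omega)]
        simp [pow_succ]
        ring
      rw [Finset.sum_congr rfl this, ← Finset.mul_sum, pow_succ]
      linear_combination z * hev
  have hsum2m : ∑ j ∈ Finset.range (2*m), a j * z ^ j = -(w ^ m) := by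
    have : w ^ m = z ^ (2*m) := by rw [hw, ← pow_mul]
    rw [this]
    linear_combination hPz
  have hwpow : ∀ k : ℕ, w ^ k = z ^ (2*k) := fun k => by rw [hw, ← pow_mul]
  -- even / odd partial sums
  set Se : ℂ := ∑ k ∈ Finset.range m, a (2*k) * z ^ (2*k) with hSe
  set So : ℂ := ∑ k ∈ Finset.range m, a (2*k+1) * z ^ (2*k+1) with hSo
  have hSeSo : Se + So = -(w ^ m) := by
    rw [hSe, hSo, ← Finset.sum_add_distrib, ← pairsum (fun j => a j * z ^ j) m]
    exact hsum2m
  -- E0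
  have E0 : ∑ k ∈ Finset.range m, w ^ k * (a (2*k) + z * a (2*k+1)) = -(w ^ m) := by
    rw [← hSeSo, hSe, hSo, ← Finset.sum_add_distrib]
    apply Finset.sum_congr rfl
    intro k _
    rw [hwpow k, pow_succ]
    ring
  -- E1
  have E1 : ∑ k ∈ Finset.range m,
      w ^ k * (A k 0 1 + z * A k 1 1) = w ^ m * z := by
    have key : ∀ k ∈ Finset.range m, w ^ k * (A k 0 1 + z * A k 1 1)
        = a (n-1) * (w ^ k * (a (2*k) + z * a (2*k+1))) - z * (a (2*k) * z ^ (2*k))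
          - (if k = 0 then 0 else w ^ k * a (2*k-1)) := by
      intro k hk
      simp only [Finset.mem_range] at hk
      rcases Nat.eq_zero_or_pos k with rfl | hk1
      · simp only [hA0, if_pos rfl]
        simp [Matrix.cons_val_zero, Matrix.cons_val_one]
        ring
      · rw [hA k hk1 (by omega), if_neg (by omega)]
        simp [Matrix.cons_val_zero, Matrix.cons_val_one]
        rw [hwpow k]
        ring
    rw [Finset.sum_congr rfl key]
    rw [Finset.sum_sub_distrib, Finset.sum_sub_distrib, ← Finset.mul_sum, E0]
    have hite : ∑ k ∈ Finset.range m, (if k = 0 then (0:ℂ) else w ^ k * a (2*k-1))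
        = z * So - a (n-1) * z ^ (2*m) := by
      have hmsucc : m = (m - 1) + 1 := by omega
      have hSo' : So = (∑ i ∈ Finset.range (m-1), a (2*i+1) * z ^ (2*i+1))
          + a (2*(m-1)+1) * z ^ (2*(m-1)+1) := by
        rw [hSo]
        conv_lhs => rw [hmsucc, Finset.sum_range_succ]
      have hn1 : 2*(m-1)+1 = n - 1 := by omega
      have hzpow : z * (a (2*(m-1)+1) * z ^ (2*(m-1)+1)) = a (n-1) * z ^ (2*m) := by
        rw [hn1]
        have h3 : (2*m) = (2*(m-1)+1) + 1 := by omega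
        rw [h3, pow_succ, hn1]
        ring
      conv_lhs => rw [hmsucc, Finset.sum_range_succ']
      have hstep : ∀ i ∈ Finset.range (m-1),
          (if i + 1 = 0 then (0:ℂ) else w ^ (i+1) * a (2*(i+1)-1))
          = z * (a (2*i+1) * z ^ (2*i+1)) := by
        intro i _
        rw [if_neg (by omega), hwpow (i+1)]
        have h1 : 2*(i+1) - 1 = 2*i+1 := by omega
        have h2 : 2*(i+1) = (2*i+1) + 1 := by omega
        rw [h1, h2, pow_succ]
        ring
      rw [Finset.sum_congr rfl hstep, if_pos rfl, add_zero, ← Finset.mul_sum]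
      rw [hSo', mul_add, hzpow]
      ring
    rw [hite]
    have hze : ∑ k ∈ Finset.range m, z * (a (2*k) * z ^ (2*k)) = z * Se := by
      rw [hSe, Finset.mul_sum]
    rw [hze]
    have hz2m : z ^ (2*m) = w ^ m := (hwpow m).symm
    rw [hz2m]
    have hfin : a (n-1) * -(w^m) - z * Se - (z * So - a (n-1) * w ^ m)
        = -z * (Se + So) := by ring
    rw [hfin, hSeSo]
    ring
  -- Step C : row eigenvector equation for the block matrix polynomial
  set y : Fin 2 → ℂ := ![1, z] with hy
  set Q : Matrix (Fin 2) (Fin 2) ℂ := ∑ k ∈ Finset.range m, w ^ k • A k with hQ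
  have hQapp : ∀ i j : Fin 2, Q i j = ∑ k ∈ Finset.range m, w ^ k * A k i j := by
    intro i j
    rw [hQ, Matrix.sum_apply]
    rfl
  have hAk0 : ∀ k ∈ Finset.range m, A k 0 0 = -(a (2*k)) ∧ A k 1 0 = -(a (2*k+1)) := by
    intro k hk
    simp only [Finset.mem_range] at hk
    rcases Nat.eq_zero_or_pos k with rfl | hk1
    · rw [hA0]; constructor <;> simp
    · rw [hA k hk1 (by omega)]; constructor <;> simp
  have hcomp : ∀ j : Fin 2, Matrix.vecMul y Q j
      = ∑ k ∈ Finset.range m, w ^ k * (A k 0 j + z * A k 1 j) := by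
    intro j
    have hj : Matrix.vecMul y Q j = Q 0 j + z * Q 1 j := by
      simp [Matrix.vecMul, dotProduct, Fin.sum_univ_two, hy]
    rw [hj, hQapp, hQapp, Finset.mul_sum, ← Finset.sum_add_distrib]
    apply Finset.sum_congr rfl
    intro k _; ring
  have hvecyQ : Matrix.vecMul y Q = w ^ m • y := by
    apply _root_.funext
    rw [Fin.forall_fin_two]
    constructor
    · rw [hcomp 0]
      have hrw2 : ∀ k ∈ Finset.range m,
          w ^ k * (A k 0 0 + z * A k 1 0) = -(w ^ k * (a (2*k) + z * a (2*k+1))) := by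
        intro k hk
        rw [(hAk0 k hk).1, (hAk0 k hk).2]; ring
      rw [Finset.sum_congr rfl hrw2, Finset.sum_neg_distrib, E0]
      simp [hy]
    · rw [hcomp 1, E1]
      simp [hy]
  have hdet : IsUnit S.det := (Matrix.isUnit_iff_isUnit_det S).mp hS
  have hSS : S * S⁻¹ = 1 := Matrix.mul_nonsing_inv S hdet
  set v : Fin 2 → ℂ := Matrix.vecMul y S with hv
  set D : Matrix (Fin 2) (Fin 2) ℂ := !![α, 0; 0, β] with hD
  set N : Matrix (Fin 2) (Fin 2) ℂ := ∑ k ∈ Finset.range (m-1), w ^ k • T k with hN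
  have hsplit : S⁻¹ * Q * S = N + w^(m-1) • D := by
    rw [hQ, Finset.mul_sum, Finset.sum_mul]
    have h1 : ∀ k ∈ Finset.range m, (S⁻¹ * (w^k • A k)) * S = w^k • (S⁻¹ * A k * S) := by
      intro k _; rw [Matrix.mul_smul, Matrix.smul_mul]
    rw [Finset.sum_congr rfl h1]
    conv_lhs => rw [show m = (m-1)+1 from by omega, Finset.sum_range_succ]
    rw [hdiag, hN, hD]
    congr 1
    apply Finset.sum_congr rfl
    intro k hk
    simp only [Finset.mem_range] at hk
    rw [hT k (by omega)]
  have hvQ : Matrix.vecMul v (N + w^(m-1) • D) = w ^ m • v := by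
    rw [← hsplit, hv, Matrix.vecMul_vecMul]
    rw [show S * (S⁻¹ * Q * S) = (S * S⁻¹) * (Q * S) from by noncomm_ring, hSS, one_mul]
    rw [← Matrix.vecMul_vecMul, hvecyQ, Matrix.smul_vecMul]
  have hvD : Matrix.vecMul v D 0 = v 0 * α ∧ Matrix.vecMul v D 1 = v 1 * β := by
    constructor <;> simp [hD, Matrix.vecMul, dotProduct, Fin.sum_univ_two]
  have hpowm : w ^ m = w ^ (m-1) * w := by
    conv_lhs => rw [show m = (m-1)+1 from by omega, pow_succ]
  have hN0 : Matrix.vecMul v N 0 = w^(m-1) * ((w - α) * v 0) := by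
    have h := congrFun hvQ 0
    rw [Matrix.vecMul_add, vecMul_matsmul] at h
    simp only [Pi.add_apply, Pi.smul_apply, smul_eq_mul] at h
    rw [hvD.1, hpowm] at h
    linear_combination h
  have hN1 : Matrix.vecMul v N 1 = w^(m-1) * ((w - β) * v 1) := by
    have h := congrFun hvQ 1
    rw [Matrix.vecMul_add, vecMul_matsmul] at h
    simp only [Pi.add_apply, Pi.smul_apply, smul_eq_mul] at h
    rw [hvD.2, hpowm] at h
    linear_combination h
  -- Step D : norm estimates
  have hvne : v ≠ 0 := by
    intro h0
    have hy' : y = Matrix.vecMul v S⁻¹ := by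
      rw [hv, Matrix.vecMul_vecMul, hSS, Matrix.vecMul_one]
    rw [h0, Matrix.zero_vecMul] at hy'
    have : (1 : ℂ) = 0 := by
      have := congrFun hy' 0
      simpa [hy] using this
    exact one_ne_zero this
  have hnv : 0 < ‖ev v‖ := by
    rw [norm_pos_iff]
    intro h
    exact hvne ((WithLp.equiv 2 (Fin 2 → ℂ)).symm.injective (h.trans rfl))
  set r : ℝ := min (‖w - α‖) (‖w - β‖) with hr
  have hrτ : τ x < r := lt_min hα1 hβ1
  have hr0 : 0 ≤ r := le_min (norm_nonneg _) (norm_nonneg _)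
  have hwx : (0:ℝ) < ‖w‖ := lt_trans hx hx1
  have hlow : ‖w‖ ^ (m-1) * r * ‖ev v‖ ≤ ‖ev (Matrix.vecMul v N)‖ := by
    have hsq : (‖w‖ ^ (m-1) * r * ‖ev v‖)^2 ≤ ‖ev (Matrix.vecMul v N)‖^2 := by
      rw [ev_norm_sq, hN0, hN1, mul_pow, mul_pow, ev_norm_sq]
      simp only [norm_mul, norm_pow]
      have h1 : r ≤ ‖w - α‖ := min_le_left _ _
      have h2 : r ≤ ‖w - β‖ := min_le_right _ _
      have e0 : (0:ℝ) ≤ ‖v 0‖ := norm_nonneg _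
      have e1 : (0:ℝ) ≤ ‖v 1‖ := norm_nonneg _
      have ew : (0:ℝ) ≤ ‖w‖ ^ (m-1) := by positivity
      nlinarith [sq_nonneg (‖v 0‖), sq_nonneg (‖v 1‖),
        mul_nonneg e0 e0, mul_nonneg e1 e1, sq_nonneg (‖w‖ ^ (m-1)),
        mul_le_mul_of_nonneg_right (mul_le_mul h1 h1 hr0 (norm_nonneg _)) (mul_nonneg e0 e0),
        mul_le_mul_of_nonneg_right (mul_le_mul h2 h2 hr0 (norm_nonneg _)) (mul_nonneg e1 e1)]
    have hnn1 : 0 ≤ ‖w‖ ^ (m-1) * r * ‖ev v‖ := by positivity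
    exact (pow_le_pow_iff_left₀ hnn1 (norm_nonneg _) two_ne_zero).mp hsq
  have hup : ‖ev (Matrix.vecMul v N)‖
      ≤ (∑ k ∈ Finset.range (m-1), ‖w‖ ^ k * specNorm (T k)) * ‖ev v‖ := by
    rw [hN, vecMul_finset_sum, ev_sum]
    calc ‖∑ k ∈ Finset.range (m-1), ev (Matrix.vecMul v (w^k • T k))‖
        ≤ ∑ k ∈ Finset.range (m-1), ‖ev (Matrix.vecMul v (w^k • T k))‖ :=
          norm_sum_le _ _
      _ ≤ ∑ k ∈ Finset.range (m-1), ‖w‖ ^ k * specNorm (T k) * ‖ev v‖ := by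
          apply Finset.sum_le_sum
          intro k _
          rw [vecMul_matsmul, show ev (w^k • Matrix.vecMul v (T k)) = w^k • ev (Matrix.vecMul v (T k)) from rfl,
            norm_smul]
          have : ‖w^k‖ = ‖w‖ ^ k := by
            rw [norm_pow]
          rw [this, mul_assoc]
          exact mul_le_mul_of_nonneg_left (vecMul_norm_le _ _) (by positivity)
      _ = (∑ k ∈ Finset.range (m-1), ‖w‖ ^ k * specNorm (T k)) * ‖ev v‖ := by
          rw [Finset.sum_mul]
  have hmain : ‖w‖ ^ (m-1) * r
      ≤ ∑ k ∈ Finset.range (m-1), ‖w‖ ^ k * specNorm (T k) :=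
    le_of_mul_le_mul_right (hlow.trans hup) hnv
  have hτx : τ x = ∑ j ∈ Finset.range (m-1), specNorm (T j) / x ^ (m-1-j) := by
    rw [hτ x hx]
    exact icc_reflect m hm2 (fun i => specNorm (T i)) x
  have hchain : ∑ k ∈ Finset.range (m-1), ‖w‖ ^ k * specNorm (T k)
      ≤ τ x * ‖w‖ ^ (m-1) := by
    rw [hτx, Finset.sum_mul]
    apply Finset.sum_le_sum
    intro k hk
    simp only [Finset.mem_range] at hk
    have hsN : 0 ≤ specNorm (T k) := norm_nonneg _
    have hsplitpow : ‖w‖ ^ (m-1) = ‖w‖ ^ k * ‖w‖ ^ (m-1-k) := by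
      rw [← pow_add]
      congr 1
      omega
    have hxw : x ^ (m-1-k) ≤ ‖w‖ ^ (m-1-k) :=
      pow_le_pow_left₀ (le_of_lt hx) (le_of_lt hx1) _
    rw [div_mul_eq_mul_div, hsplitpow, le_div_iff₀ (by positivity)]
    have hwk : (0:ℝ) ≤ ‖w‖ ^ k := by positivity
    nlinarith [mul_nonneg hwk hsN, pow_pos hx (m-1-k)]
  have hfinal : r ≤ τ x := by
    have h := hmain.trans hchain
    have hwp : (0:ℝ) < ‖w‖ ^ (m-1) := by positivity
    rw [mul_comm (τ x) _] at h
    exact le_of_mul_le_mul_left (by rw [mul_comm] at h ⊢; exact h) hwp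
  linarith
end
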